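/- Let P[f] be a homogeneous differential polynomial of (lower) degree d = d̲(P), weight Γ_P, and order k, with Γ_P > (k+1)d − (p+1), and let j, p be positive integers with j ≥ p+1. If z₀ is a zero of f of multiplicity t with t·d ≥ j + Γ_P − d, then t ≥ k+1 and z₀ is a zero of P[f] of multiplicity at least j. -/

import Mathlib

open Filter Finset

lemma analyticAt_deriv' {G : ℂ → ℂ} {z₀ : ℂ} (hG : AnalyticAt ℂ G z₀) :
    AnalyticAt ℂ (deriv G) z₀ := by
  have h1 : AnalyticAt ℂ (fun z => fderiv ℂ G z 1) z₀ :=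
    ((ContinuousLinearMap.apply ℂ ℂ (1 : ℂ)).analyticAt _).comp hG.fderiv
  simpa only [fderiv_apply_one_eq_deriv] using h1

lemma aux_deriv (z₀ : ℂ) (m : ℕ) (hm : 1 ≤ m) (G F : ℂ → ℂ) (hG : AnalyticAt ℂ G z₀)
    (hF : F =ᶠ[nhds z₀] fun z => (z - z₀) ^ m * G z) :
    ∃ G', AnalyticAt ℂ G' z₀ ∧
      deriv F =ᶠ[nhds z₀] fun z => (z - z₀) ^ (m - 1) * G' z := by
  refine ⟨fun z => (m : ℂ) * G z + (z - z₀) * deriv G z, ?_, ?_⟩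
  · exact (analyticAt_const.mul hG).add
      ((analyticAt_id.sub analyticAt_const).mul (analyticAt_deriv' hG))
  · filter_upwards [hF.deriv, hG.eventually_analyticAt] with z hz hGz
    rw [hz]
    have hd1 : HasDerivAt (fun z : ℂ => (z - z₀) ^ m) ((m : ℂ) * (z - z₀) ^ (m - 1)) z := by
      simpa using ((hasDerivAt_id z).sub_const z₀).fun_pow m
    have hd2 : HasDerivAt G (deriv G z) z := hGz.differentiableAt.hasDerivAt
    rw [(hd1.fun_mul hd2).deriv]
    have hmm : m - 1 + 1 = m := by omega
    calc (m : ℂ) * (z - z₀) ^ (m - 1) * G z + (z - z₀) ^ m * deriv G z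
        = (m : ℂ) * (z - z₀) ^ (m - 1) * G z
          + (z - z₀) ^ (m - 1) * (z - z₀) * deriv G z := by
          rw [← pow_succ, hmm]
      _ = (z - z₀) ^ (m - 1) * ((m : ℂ) * G z + (z - z₀) * deriv G z) := by ring

theorem stmt_6 (k d Γ p j t : ℕ) (hp : 0 < p) (hj : p + 1 ≤ j)
    {ι : Type*} [Fintype ι] (nn : ι → ℕ → ℕ) (b : ι → ℂ → ℂ)
    (f g : ℂ → ℂ) (z₀ : ℂ)
    (hdeg : ∀ c, ∑ i ∈ Finset.range (k + 1), nn c i = d)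
    (hwt : ∀ c, ∑ i ∈ Finset.range (k + 1), (i + 1) * nn c i ≤ Γ)
    (hΓ : ((k + 1) * d : ℤ) - (p + 1) < (Γ : ℤ))
    (hb : ∀ c, AnalyticAt ℂ (b c) z₀)
    (hg : AnalyticAt ℂ g z₀) (hg0 : g z₀ ≠ 0) (ht0 : 0 < t)
    (hf : ∀ᶠ z in nhds z₀, f z = (z - z₀) ^ t * g z)
    (htd : (j : ℤ) + Γ - d ≤ (t * d : ℤ)) :
    k + 1 ≤ t ∧
      ∃ h : ℂ → ℂ, AnalyticAt ℂ h z₀ ∧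
        ∀ᶠ z in nhds z₀,
          (∑ c : ι, b c z * ∏ i ∈ Finset.range (k + 1), iteratedDeriv i f z ^ nn c i)
            = (z - z₀) ^ j * h z := by
  have htk : k + 1 ≤ t := by
    by_contra hcon
    push_neg at hcon
    have h1 : t * d ≤ k * d := Nat.mul_le_mul_right d (by omega)
    have h2 : (t * d : ℤ) ≤ (k : ℤ) * d := by exact_mod_cast h1
    have h3 : ((k + 1) * d : ℤ) = (k : ℤ) * d + d := by ring
    have h4 : (p : ℤ) + 1 ≤ j := by exact_mod_cast hj
    linarith
  refine ⟨htk, ?_⟩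
  -- factor the iterated derivatives
  have key0 : ∀ i, i ≤ k → ∃ G, AnalyticAt ℂ G z₀ ∧
      iteratedDeriv i f =ᶠ[nhds z₀] fun z => (z - z₀) ^ (t - i) * G z := by
    intro i
    induction i with
    | zero =>
      intro _
      exact ⟨g, hg, by simpa [iteratedDeriv_zero, Filter.EventuallyEq] using hf⟩
    | succ n ih =>
      intro hn
      obtain ⟨G, hGa, hGe⟩ := ih (by omega)
      obtain ⟨G', hGa', hGe'⟩ := aux_deriv z₀ (t - n) (by omega) G _ hGa hGe
      refine ⟨G', hGa', ?_⟩
      rw [iteratedDeriv_succ]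
      have hsub : t - n - 1 = t - (n + 1) := by omega
      rw [← hsub]
      exact hGe'
  have key : ∀ i, ∃ G, AnalyticAt ℂ G z₀ ∧ (i ≤ k →
      iteratedDeriv i f =ᶠ[nhds z₀] fun z => (z - z₀) ^ (t - i) * G z) := by
    intro i
    by_cases hi : i ≤ k
    · obtain ⟨G, h1, h2⟩ := key0 i hi
      exact ⟨G, h1, fun _ => h2⟩
    · exact ⟨fun _ => 0, analyticAt_const, fun h => absurd h hi⟩
  choose G hGa hGe using key
  -- exponent bound
  have hje : ∀ c, j ≤ ∑ i ∈ Finset.range (k + 1), (t - i) * nn c i := by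
    intro c
    have hS : (∑ i ∈ Finset.range (k + 1), (i : ℤ) * nn c i) + d ≤ Γ := by
      have hsplit : ∑ i ∈ Finset.range (k + 1), (i + 1) * nn c i
          = (∑ i ∈ Finset.range (k + 1), i * nn c i) + d := by
        rw [← hdeg c, ← Finset.sum_add_distrib]
        exact Finset.sum_congr rfl fun i _ => by ring
      have h := hwt c
      rw [hsplit] at h
      exact_mod_cast h
    have h1 : ((∑ i ∈ Finset.range (k + 1), (t - i) * nn c i : ℕ) : ℤ)
        = (t : ℤ) * d - ∑ i ∈ Finset.range (k + 1), (i : ℤ) * nn c i := by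
      have hstep : ((∑ i ∈ Finset.range (k + 1), (t - i) * nn c i : ℕ) : ℤ)
          = ∑ i ∈ Finset.range (k + 1), ((t : ℤ) * nn c i - (i : ℤ) * nn c i) := by
        push_cast
        refine Finset.sum_congr rfl fun i hi => ?_
        have hit : i ≤ t := by have := Finset.mem_range.1 hi; omega
        rw [Nat.cast_sub hit]
        ring
      rw [hstep, Finset.sum_sub_distrib, ← Finset.mul_sum]
      have hd' : (∑ i ∈ Finset.range (k + 1), (nn c i : ℤ)) = (d : ℤ) := by
        exact_mod_cast congrArg (Nat.cast : ℕ → ℤ) (hdeg c)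
      rw [hd']
    have : (j : ℤ) ≤ ((∑ i ∈ Finset.range (k + 1), (t - i) * nn c i : ℕ) : ℤ) := by
      rw [h1]; push_cast at htd ⊢; linarith
    exact_mod_cast this
  refine ⟨fun z => ∑ c : ι, (z - z₀) ^ ((∑ i ∈ Finset.range (k + 1), (t - i) * nn c i) - j)
      * (b c z * ∏ i ∈ Finset.range (k + 1), G i z ^ nn c i), ?_, ?_⟩
  · refine Finset.analyticAt_fun_sum _ fun c _ => ?_
    exact ((analyticAt_id.sub analyticAt_const).pow _).mul
      ((hb c).mul (Finset.analyticAt_fun_prod _ fun i _ => (hGa i).pow _))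
  · have hall : ∀ᶠ z in nhds z₀, ∀ i ∈ Finset.range (k + 1),
        iteratedDeriv i f z = (z - z₀) ^ (t - i) * G i z := by
      rw [eventually_all_finset]
      intro i hi
      exact hGe i (by have := Finset.mem_range.1 hi; omega)
    filter_upwards [hall] with z hz
    rw [Finset.mul_sum]
    refine Finset.sum_congr rfl fun c _ => ?_
    have hprod : (∏ i ∈ Finset.range (k + 1), iteratedDeriv i f z ^ nn c i)
        = (z - z₀) ^ (∑ i ∈ Finset.range (k + 1), (t - i) * nn c i)
          * ∏ i ∈ Finset.range (k + 1), G i z ^ nn c i := by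
      rw [Finset.prod_congr rfl fun i hi => by rw [hz i hi]]
      simp only [mul_pow, Finset.prod_mul_distrib, ← pow_mul, Finset.prod_pow_eq_pow_sum]
    rw [hprod]
    have hexp : (z - z₀) ^ (∑ i ∈ Finset.range (k + 1), (t - i) * nn c i)
        = (z - z₀) ^ j * (z - z₀) ^ ((∑ i ∈ Finset.range (k + 1), (t - i) * nn c i) - j) := by
      rw [← pow_add, Nat.add_sub_cancel' (hje c)]
    rw [hexp]
    ring
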